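/- Let M ≥ 2, let A = (A_1,…,A_M) be a tuple of d×d real matrices, let s > 0, and let μ be a σ-invariant Borel probability measure on Σ_M satisfying the Gibbs inequality for (A,s) with constants C > 0 and P ∈ ℝ. Then for every pair of Borel sets X, Y ⊆ Σ_M one has limsup_{n→∞} μ(X ∩ σ^{−n}Y) ≤ C⁴ μ(X) μ(Y). -/

import Mathlib

open MeasureTheory Filter Topology

/-- The operator norm on square real matrices induced by the Euclidean norm. -/
noncomputable def opNorm {n : Type*} [Fintype n] [DecidableEq n]
    (X : Matrix n n ℝ) : ℝ :=
  ‖Matrix.toEuclideanCLM (𝕜 := ℝ) X‖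

/-- The spectral radius `ρ(X) = inf_{k ≥ 1} ‖X^k‖^(1/k)` (Gelfand). -/
noncomputable def specRad {n : Type*} [Fintype n] [DecidableEq n]
    (X : Matrix n n ℝ) : ℝ :=
  ⨅ k : ℕ, opNorm (X ^ (k + 1)) ^ ((1 : ℝ) / (k + 1))

/-- The product `A_{x_n} ⋯ A_{x_1}` associated to the word `x = (x_1, …, x_n)`. -/
noncomputable def wordProd {M d n : ℕ} (A : Fin M → Matrix (Fin d) (Fin d) ℝ)
    (x : Fin n → Fin M) : Matrix (Fin d) (Fin d) ℝ :=
  (List.ofFn (fun i => A (x i))).reverse.prod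

/-- The product `A_{x_n} ⋯ A_{x_1}` associated to the word `w = [x_1, …, x_n]`. -/
noncomputable def listProd {M d : ℕ} (A : Fin M → Matrix (Fin d) (Fin d) ℝ)
    (w : List (Fin M)) : Matrix (Fin d) (Fin d) ℝ :=
  ((w.map A).reverse).prod

/-- Irreducibility: no invariant subspace `U` with `0 < dim U < d`. -/
def IsIrredTuple {M d : ℕ} (A : Fin M → Matrix (Fin d) (Fin d) ℝ) : Prop :=
  ¬ ∃ U : Submodule ℝ (Fin d → ℝ),
      (∀ i, U.map (A i).mulVecLin ≤ U) ∧ U ≠ ⊥ ∧ U ≠ ⊤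

/-- The shift map on `Σ_M = {1,…,M}^ℕ`. -/
def shift {M : ℕ} : (ℕ → Fin M) → (ℕ → Fin M) := fun x n => x (n + 1)

/-- The cylinder set `[x_1 ⋯ x_n]` determined by the word `w = [x_1, …, x_n]`. -/
def cyl {M : ℕ} (w : List (Fin M)) : Set (ℕ → Fin M) :=
  {y | ∀ i : Fin w.length, y (i : ℕ) = w.get i}

/-- The Gibbs inequality for `(A, s)` with constants `C > 0`, `P ∈ ℝ`. -/
def IsGibbs {M d : ℕ} (A : Fin M → Matrix (Fin d) (Fin d) ℝ) (s C P : ℝ)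
    (μ : Measure (ℕ → Fin M)) : Prop :=
  ∀ w : List (Fin M), w ≠ [] →
    C⁻¹ * (μ (cyl w)).toReal ≤ Real.exp (-(w.length : ℝ) * P) * opNorm (listProd A w) ^ s ∧
    Real.exp (-(w.length : ℝ) * P) * opNorm (listProd A w) ^ s ≤ C * (μ (cyl w)).toReal

/-- The pressure `P(A,s) = inf_{n ≥ 1} (1/n) log Σ_{|x| = n} ‖A_{x_n} ⋯ A_{x_1}‖^s ∈ [-∞, ∞)`,
with the convention that a term is `-∞` when the corresponding sum vanishes. -/
noncomputable def pressure {M d : ℕ} (A : Fin M → Matrix (Fin d) (Fin d) ℝ) (s : ℝ) : EReal :=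
  ⨅ n : ℕ,
    if (∑ x : Fin (n + 1) → Fin M, opNorm (wordProd A x) ^ s) = 0 then (⊥ : EReal)
    else ((Real.log (∑ x : Fin (n + 1) → Fin M, opNorm (wordProd A x) ^ s) / (n + 1) : ℝ) : EReal)

namespace S3
variable {M : ℕ}

/-- projection on first n coordinates -/
def proj (M n : ℕ) (y : ℕ → Fin M) : Fin n → Fin M := fun i => y i

lemma measurable_proj (M n : ℕ) : Measurable (proj M n) :=
  measurable_pi_lambda _ fun i => measurable_pi_apply _

lemma shift_iterate (n : ℕ) (y : ℕ → Fin M) (i : ℕ) : shift^[n] y i = y (i + n) := by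
  induction n generalizing y i with
  | zero => rfl
  | succ n ih =>
    rw [Function.iterate_succ_apply, ih]
    simp [shift, Nat.add_assoc]

lemma mem_cyl {w : List (Fin M)} {y : ℕ → Fin M} :
    y ∈ cyl w ↔ ∀ i, (h : i < w.length) → y i = w[i] := by
  constructor
  · intro hy i h; exact hy ⟨i, h⟩
  · intro hy i; exact hy i i.isLt

lemma cyl_ofFn {n : ℕ} (g : Fin n → Fin M) :
    cyl (List.ofFn g) = proj M n ⁻¹' {g} := by
  ext y
  simp only [Set.mem_preimage, Set.mem_singleton_iff, mem_cyl, List.length_ofFn]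
  constructor
  · intro h; funext i
    have := h i i.isLt
    simpa [List.getElem_ofFn, proj] using this
  · intro h i hi
    have : proj M n y ⟨i, hi⟩ = g ⟨i, hi⟩ := by rw [h]
    simpa [List.getElem_ofFn, proj] using this

lemma cyl_append (w v : List (Fin M)) :
    cyl (w ++ v) = cyl w ∩ shift^[w.length] ⁻¹' cyl v := by
  ext y
  simp only [Set.mem_inter_iff, Set.mem_preimage, mem_cyl, List.length_append]
  constructor
  · intro h
    refine ⟨fun i hi => ?_, fun i hi => ?_⟩
    · have := h i (by omega)
      rwa [List.getElem_append_left hi] at this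
    · have := h (i + w.length) (by omega)
      rw [shift_iterate, this, List.getElem_append_right (by omega)]
      congr 1
      omega
  · intro ⟨h1, h2⟩ i hi
    by_cases hiw : i < w.length
    · rw [List.getElem_append_left hiw]; exact h1 i hiw
    · have hi2 : i - w.length < v.length := by omega
      have := h2 (i - w.length) hi2
      rw [shift_iterate] at this
      have hie : i - w.length + w.length = i := by omega
      rw [hie] at this
      rw [this, List.getElem_append_right (by omega)]

lemma measurableSet_cyl (w : List (Fin M)) : MeasurableSet (cyl w) := by
  have : cyl w = ⋂ i : Fin w.length, (fun y : ℕ → Fin M => y (i : ℕ)) ⁻¹' {w.get i} := by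
    ext y; simp [cyl, Set.mem_iInter, List.get_eq_getElem]
  rw [this]
  exact MeasurableSet.iInter fun i => (measurable_pi_apply _) (measurableSet_singleton _)

end S3

namespace S3
variable {M : ℕ}

/-- the algebra of sets determined by the first (n+1) coordinates -/
def alg (M : ℕ) : Set (Set (ℕ → Fin M)) :=
  {E | ∃ n : ℕ, ∃ S : Set (Fin (n + 1) → Fin M), E = proj M (n + 1) ⁻¹' S}

lemma proj_comp {m n : ℕ} (h : n ≤ m) (S : Set (Fin n → Fin M)) :
    proj M n ⁻¹' S = proj M m ⁻¹' ((fun g : Fin m → Fin M => fun i : Fin n => g (Fin.castLE h i)) ⁻¹' S) := by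
  rfl

lemma isSetAlgebra_alg : IsSetAlgebra (alg M) := by
  constructor
  · exact ⟨0, ∅, by simp⟩
  · rintro s ⟨n, S, rfl⟩
    exact ⟨n, Sᶜ, by simp⟩
  · rintro s t ⟨n, S, rfl⟩ ⟨m, T, rfl⟩
    rcases le_total (n + 1) (m + 1) with h | h
    · refine ⟨m, ((fun g : Fin (m+1) → Fin M => fun i : Fin (n+1) => g (Fin.castLE h i)) ⁻¹' S) ∪ T, ?_⟩
      rw [Set.preimage_union, ← proj_comp h S]
    · refine ⟨n, S ∪ ((fun g : Fin (n+1) → Fin M => fun i : Fin (m+1) => g (Fin.castLE h i)) ⁻¹' T), ?_⟩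
      rw [Set.preimage_union, ← proj_comp h T]

lemma measurableSet_of_mem_alg {E : Set (ℕ → Fin M)} (hE : E ∈ alg M) : MeasurableSet E := by
  obtain ⟨n, S, rfl⟩ := hE
  exact (measurable_proj M (n+1)) (by measurability)

lemma generateFrom_alg : (inferInstance : MeasurableSpace (ℕ → Fin M)) =
    MeasurableSpace.generateFrom (alg M) := by
  refine le_antisymm ?_ ?_
  · rw [MeasurableSpace.pi]
    refine iSup_le fun i => ?_
    rw [MeasurableSpace.comap_le_iff_le_map]
    intro s hs
    refine MeasurableSpace.measurableSet_generateFrom ?_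
    refine ⟨i, {g : Fin (i + 1) → Fin M | g ⟨i, by omega⟩ ∈ s}, ?_⟩
    rfl
  · rw [MeasurableSpace.generateFrom_le_iff]
    intro E hE
    exact measurableSet_of_mem_alg hE

lemma measure_preimage_proj (μ : Measure (ℕ → Fin M)) {n : ℕ} (S : Set (Fin n → Fin M)) :
    μ (proj M n ⁻¹' S) = ∑ g ∈ (Set.toFinite S).toFinset, μ (proj M n ⁻¹' {g}) := by
  classical
  have h1 : proj M n ⁻¹' S = ⋃ g ∈ (Set.toFinite S).toFinset, proj M n ⁻¹' {g} := by
    ext y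
    simp [Set.Finite.mem_toFinset]
  rw [h1]
  refine measure_biUnion_finset ?_ ?_
  · intro a _ b _ hab
    exact Disjoint.preimage _ (by simpa using hab)
  · intro g _
    exact (measurable_proj M n) (by measurability)

end S3

namespace S3

lemma opNorm_nonneg {d : ℕ} (X : Matrix (Fin d) (Fin d) ℝ) : 0 ≤ opNorm X :=
  norm_nonneg _

lemma opNorm_mul_le {d : ℕ} (X Y : Matrix (Fin d) (Fin d) ℝ) :
    opNorm (X * Y) ≤ opNorm X * opNorm Y := by
  unfold opNorm
  rw [map_mul]
  exact norm_mul_le _ _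

lemma listProd_append {M d : ℕ} (A : Fin M → Matrix (Fin d) (Fin d) ℝ) (w v : List (Fin M)) :
    listProd A (w ++ v) = listProd A v * listProd A w := by
  unfold listProd
  rw [List.map_append, List.reverse_append, List.prod_append]

section main
variable {M d : ℕ} {A : Fin M → Matrix (Fin d) (Fin d) ℝ} {s C P : ℝ}
  {μ : Measure (ℕ → Fin M)} [IsProbabilityMeasure μ]

lemma one_le_C (hM : 2 ≤ M) (hC : 0 < C) (hG : IsGibbs A s C P μ) : 1 ≤ C := by
  by_contra hlt
  push_neg at hlt
  -- then every 1-letter cylinder is null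
  have hnull : ∀ a : Fin M, μ (cyl [a]) = 0 := by
    intro a
    have h := hG [a] (by simp)
    have ht : 0 ≤ (μ (cyl [a])).toReal := ENNReal.toReal_nonneg
    have hCinv : C < C⁻¹ := lt_trans hlt ((one_lt_inv₀ hC).mpr hlt)
    have : (μ (cyl [a])).toReal = 0 := by nlinarith [h.1, h.2, inv_pos.mpr hC]
    exact (ENNReal.toReal_eq_zero_iff _).mp this |>.resolve_right (measure_ne_top μ _)
  have hcover : (Set.univ : Set (ℕ → Fin M)) ⊆ ⋃ a : Fin M, cyl [a] := by
    intro y _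
    refine Set.mem_iUnion.mpr ⟨y 0, ?_⟩
    intro i
    have hi := i.isLt
    simp only [List.length_cons, List.length_nil] at hi
    have : (i : ℕ) = 0 := by omega
    simp [this]
  have h1 : (1 : ENNReal) ≤ 0 := by
    calc (1 : ENNReal) = μ Set.univ := (measure_univ).symm
    _ ≤ μ (⋃ a : Fin M, cyl [a]) := measure_mono hcover
    _ ≤ ∑' a : Fin M, μ (cyl [a]) := measure_iUnion_le _
    _ = 0 := by simp [hnull]
  simp at h1

lemma cyl_prod_bound (hs : 0 < s) (hC : 0 < C) (hG : IsGibbs A s C P μ)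
    {w v : List (Fin M)} (hw : w ≠ []) (hv : v ≠ []) :
    μ (cyl (w ++ v)) ≤ ENNReal.ofReal (C ^ 3) * (μ (cyl w) * μ (cyl v)) := by
  have hwv := hG (w ++ v) (by simp [hw])
  have hww := hG w hw
  have hvv := hG v hv
  -- real inequality
  have key : (μ (cyl (w ++ v))).toReal ≤ C ^ 3 * ((μ (cyl w)).toReal * (μ (cyl v)).toReal) := by
    have h1 : (μ (cyl (w ++ v))).toReal ≤
        C * (Real.exp (-((w ++ v).length : ℝ) * P) * opNorm (listProd A (w ++ v)) ^ s) := by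
      have := hwv.1
      have hCi : 0 < C⁻¹ := inv_pos.mpr hC
      calc (μ (cyl (w ++ v))).toReal = C * (C⁻¹ * (μ (cyl (w ++ v))).toReal) := by
            field_simp
      _ ≤ C * _ := by exact mul_le_mul_of_nonneg_left this hC.le
    have h2 : Real.exp (-((w ++ v).length : ℝ) * P) * opNorm (listProd A (w ++ v)) ^ s ≤
        (Real.exp (-(w.length : ℝ) * P) * opNorm (listProd A w) ^ s) *
        (Real.exp (-(v.length : ℝ) * P) * opNorm (listProd A v) ^ s) := by
      rw [listProd_append]
      have hsub : opNorm (listProd A v * listProd A w) ^ s ≤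
          opNorm (listProd A w) ^ s * opNorm (listProd A v) ^ s := by
        calc opNorm (listProd A v * listProd A w) ^ s
            ≤ (opNorm (listProd A v) * opNorm (listProd A w)) ^ s :=
              Real.rpow_le_rpow (opNorm_nonneg _) (opNorm_mul_le _ _) hs.le
        _ = opNorm (listProd A w) ^ s * opNorm (listProd A v) ^ s := by
              rw [Real.mul_rpow (opNorm_nonneg _) (opNorm_nonneg _), mul_comm]
      have hexp : Real.exp (-((w ++ v).length : ℝ) * P) =
          Real.exp (-(w.length : ℝ) * P) * Real.exp (-(v.length : ℝ) * P) := by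
        rw [← Real.exp_add]
        congr 1
        simp [List.length_append]
        push_cast
        ring
      calc Real.exp (-((w ++ v).length : ℝ) * P) * opNorm (listProd A v * listProd A w) ^ s
          ≤ Real.exp (-((w ++ v).length : ℝ) * P) *
            (opNorm (listProd A w) ^ s * opNorm (listProd A v) ^ s) :=
            mul_le_mul_of_nonneg_left hsub (Real.exp_pos _).le
      _ = _ := by rw [hexp]; ring
    have h3 : (Real.exp (-(w.length : ℝ) * P) * opNorm (listProd A w) ^ s) *
        (Real.exp (-(v.length : ℝ) * P) * opNorm (listProd A v) ^ s) ≤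
        (C * (μ (cyl w)).toReal) * (C * (μ (cyl v)).toReal) := by
      have hnn : 0 ≤ Real.exp (-(w.length : ℝ) * P) * opNorm (listProd A w) ^ s :=
        mul_nonneg (Real.exp_pos _).le (Real.rpow_nonneg (opNorm_nonneg _) _)
      have hnn2 : 0 ≤ Real.exp (-(v.length : ℝ) * P) * opNorm (listProd A v) ^ s :=
        mul_nonneg (Real.exp_pos _).le (Real.rpow_nonneg (opNorm_nonneg _) _)
      exact mul_le_mul hww.2 hvv.2 hnn2 (by positivity)
    calc (μ (cyl (w ++ v))).toReal ≤ _ := h1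
    _ ≤ C * ((C * (μ (cyl w)).toReal) * (C * (μ (cyl v)).toReal)) := by
        refine mul_le_mul_of_nonneg_left (le_trans h2 h3) hC.le
    _ = C ^ 3 * ((μ (cyl w)).toReal * (μ (cyl v)).toReal) := by ring
  -- transfer to ℝ≥0∞
  have hfin : μ (cyl (w ++ v)) ≠ ⊤ := measure_ne_top μ _
  rw [← ENNReal.ofReal_toReal hfin]
  calc ENNReal.ofReal (μ (cyl (w ++ v))).toReal
      ≤ ENNReal.ofReal (C ^ 3 * ((μ (cyl w)).toReal * (μ (cyl v)).toReal)) :=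
        ENNReal.ofReal_le_ofReal key
  _ = ENNReal.ofReal (C ^ 3) * (ENNReal.ofReal (μ (cyl w)).toReal *
        ENNReal.ofReal (μ (cyl v)).toReal) := by
        rw [ENNReal.ofReal_mul (by positivity), ENNReal.ofReal_mul ENNReal.toReal_nonneg]
  _ = ENNReal.ofReal (C ^ 3) * (μ (cyl w) * μ (cyl v)) := by
        rw [ENNReal.ofReal_toReal (measure_ne_top μ _), ENNReal.ofReal_toReal (measure_ne_top μ _)]

end main
end S3

namespace S3
section main2
variable {M d : ℕ} {A : Fin M → Matrix (Fin d) (Fin d) ℝ} {s C P : ℝ}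
  {μ : Measure (ℕ → Fin M)} [IsProbabilityMeasure μ]

lemma key1 (hM : 2 ≤ M) (hs : 0 < s) (hC : 0 < C) (hG : IsGibbs A s C P μ)
    (hinv : MeasurePreserving (shift (M := M)) μ μ)
    {w : List (Fin M)} (hw : w ≠ []) {Y : Set (ℕ → Fin M)} (hY : MeasurableSet Y) :
    μ (cyl w ∩ shift^[w.length] ⁻¹' Y) ≤ ENNReal.ofReal (C ^ 3) * (μ (cyl w) * μ Y) := by
  refine ENNReal.le_of_forall_pos_le_add fun ε hε _ => ?_
  set n := w.length with hn
  have hC3 : (0 : ℝ) < C ^ 3 + 1 := by positivity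
  set ε' : ℝ := (ε : ℝ) / (C ^ 3 + 1) with hε'def
  have hε' : 0 < ε' := div_pos (by exact_mod_cast hε) hC3
  have hdense : μ.MeasureDense (alg M) :=
    Measure.MeasureDense.of_generateFrom_isSetAlgebra_finite μ isSetAlgebra_alg generateFrom_alg
  obtain ⟨t, ⟨m, S, rfl⟩, -, hst⟩ := hdense.fin_meas_approx hY (measure_ne_top μ Y) ε' hε'
  set T := proj M (m + 1) ⁻¹' S with hT
  have hTmeas : MeasurableSet T := measurableSet_of_mem_alg ⟨m, S, rfl⟩
  have hsymm : MeasurableSet (symmDiff Y T) := hY.symmDiff hTmeas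
  have hpre : μ (shift^[n] ⁻¹' (symmDiff Y T)) = μ (symmDiff Y T) :=
    (hinv.iterate n).measure_preimage hsymm.nullMeasurableSet
  have hsplit : cyl w ∩ shift^[n] ⁻¹' Y ⊆
      (cyl w ∩ shift^[n] ⁻¹' T) ∪ shift^[n] ⁻¹' (symmDiff Y T) := by
    rintro y ⟨h1, h2⟩
    by_cases h3 : shift^[n] y ∈ T
    · exact Or.inl ⟨h1, h3⟩
    · exact Or.inr (Set.mem_symmDiff.mpr (Or.inl ⟨h2, h3⟩))
  have hdecomp : cyl w ∩ shift^[n] ⁻¹' T =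
      ⋃ g ∈ (Set.toFinite S).toFinset, cyl (w ++ List.ofFn g) := by
    ext y
    simp only [Set.mem_iUnion, Set.Finite.mem_toFinset, cyl_append, cyl_ofFn,
      Set.mem_inter_iff, Set.mem_preimage, Set.mem_singleton_iff, hT]
    constructor
    · rintro ⟨h1, h2⟩
      exact ⟨proj M (m + 1) (shift^[n] y), h2, h1, rfl⟩
    · rintro ⟨g, hg, h1, h2⟩
      exact ⟨h1, h2 ▸ hg⟩
  have hbound1 : μ (cyl w ∩ shift^[n] ⁻¹' T) ≤ ENNReal.ofReal (C ^ 3) * (μ (cyl w) * μ T) := by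
    rw [hdecomp]
    calc μ (⋃ g ∈ (Set.toFinite S).toFinset, cyl (w ++ List.ofFn g))
        ≤ ∑ g ∈ (Set.toFinite S).toFinset, μ (cyl (w ++ List.ofFn g)) :=
          measure_biUnion_finset_le _ _
    _ ≤ ∑ g ∈ (Set.toFinite S).toFinset,
          ENNReal.ofReal (C ^ 3) * (μ (cyl w) * μ (cyl (List.ofFn g))) := by
          refine Finset.sum_le_sum fun g _ => cyl_prod_bound hs hC hG hw ?_
          intro h
          have := congrArg List.length h
          simp at this
    _ = ENNReal.ofReal (C ^ 3) * (μ (cyl w) *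
          ∑ g ∈ (Set.toFinite S).toFinset, μ (cyl (List.ofFn g))) := by
          simp only [Finset.mul_sum]
    _ = ENNReal.ofReal (C ^ 3) * (μ (cyl w) * μ T) := by
          have hsum : ∑ g ∈ (Set.toFinite S).toFinset, μ (cyl (List.ofFn g)) = μ T := by
            rw [hT, measure_preimage_proj]
            exact Finset.sum_congr rfl fun g _ => by rw [cyl_ofFn]
          rw [← hsum]
  have hμT : μ T ≤ μ Y + ENNReal.ofReal ε' := by
    have : T ⊆ Y ∪ symmDiff Y T := by
      intro y hy
      by_cases h : y ∈ Y
      · exact Or.inl h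
      · exact Or.inr (Set.mem_symmDiff.mpr (Or.inr ⟨hy, h⟩))
    calc μ T ≤ μ (Y ∪ symmDiff Y T) := measure_mono this
    _ ≤ μ Y + μ (symmDiff Y T) := measure_union_le _ _
    _ ≤ μ Y + ENNReal.ofReal ε' := add_le_add le_rfl hst.le
  have hfinal : ENNReal.ofReal (C ^ 3) * ENNReal.ofReal ε' + ENNReal.ofReal ε' = (ε : ENNReal) := by
    rw [← ENNReal.ofReal_mul (by positivity), ← ENNReal.ofReal_add (by positivity) hε'.le]
    rw [show C ^ 3 * ε' + ε' = (C ^ 3 + 1) * ε' by ring, hε'def,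
      mul_div_cancel₀ _ (ne_of_gt hC3)]
    exact ENNReal.ofReal_coe_nnreal
  calc μ (cyl w ∩ shift^[n] ⁻¹' Y)
      ≤ μ ((cyl w ∩ shift^[n] ⁻¹' T) ∪ shift^[n] ⁻¹' (symmDiff Y T)) := measure_mono hsplit
  _ ≤ μ (cyl w ∩ shift^[n] ⁻¹' T) + μ (shift^[n] ⁻¹' (symmDiff Y T)) := measure_union_le _ _
  _ ≤ ENNReal.ofReal (C ^ 3) * (μ (cyl w) * (μ Y + ENNReal.ofReal ε')) + ENNReal.ofReal ε' := by
      rw [hpre]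
      exact add_le_add (hbound1.trans (mul_le_mul' le_rfl (mul_le_mul' le_rfl hμT))) hst.le
  _ = ENNReal.ofReal (C ^ 3) * (μ (cyl w) * μ Y) +
        (ENNReal.ofReal (C ^ 3) * (μ (cyl w) * ENNReal.ofReal ε') + ENNReal.ofReal ε') := by ring
  _ ≤ ENNReal.ofReal (C ^ 3) * (μ (cyl w) * μ Y) +
        (ENNReal.ofReal (C ^ 3) * (1 * ENNReal.ofReal ε') + ENNReal.ofReal ε') := by
      gcongr
      exact prob_le_one
  _ = ENNReal.ofReal (C ^ 3) * (μ (cyl w) * μ Y) + (ε : ENNReal) := by rw [one_mul, hfinal]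

end main2
end S3

namespace S3
section main3
variable {M d : ℕ} {A : Fin M → Matrix (Fin d) (Fin d) ℝ} {s C P : ℝ}
  {μ : Measure (ℕ → Fin M)} [IsProbabilityMeasure μ]

lemma key2 (hM : 2 ≤ M) (hs : 0 < s) (hC : 0 < C) (hG : IsGibbs A s C P μ)
    (hinv : MeasurePreserving (shift (M := M)) μ μ)
    {n : ℕ} (hn : 0 < n) (S : Set (Fin n → Fin M)) {Y : Set (ℕ → Fin M)} (hY : MeasurableSet Y) :
    μ ((proj M n ⁻¹' S) ∩ shift^[n] ⁻¹' Y) ≤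
      ENNReal.ofReal (C ^ 3) * (μ (proj M n ⁻¹' S) * μ Y) := by
  have hdecomp : (proj M n ⁻¹' S) ∩ shift^[n] ⁻¹' Y =
      ⋃ g ∈ (Set.toFinite S).toFinset, (cyl (List.ofFn g) ∩ shift^[n] ⁻¹' Y) := by
    ext y
    simp only [Set.mem_iUnion, Set.Finite.mem_toFinset, cyl_ofFn, Set.mem_inter_iff,
      Set.mem_preimage, Set.mem_singleton_iff]
    constructor
    · rintro ⟨h1, h2⟩
      exact ⟨proj M n y, h1, rfl, h2⟩
    · rintro ⟨g, hg, h1, h2⟩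
      exact ⟨h1 ▸ hg, h2⟩
  rw [hdecomp]
  calc μ (⋃ g ∈ (Set.toFinite S).toFinset, (cyl (List.ofFn g) ∩ shift^[n] ⁻¹' Y))
      ≤ ∑ g ∈ (Set.toFinite S).toFinset, μ (cyl (List.ofFn g) ∩ shift^[n] ⁻¹' Y) :=
        measure_biUnion_finset_le _ _
  _ ≤ ∑ g ∈ (Set.toFinite S).toFinset,
        ENNReal.ofReal (C ^ 3) * (μ (cyl (List.ofFn g)) * μ Y) := by
      refine Finset.sum_le_sum fun g _ => ?_
      have hlen : (List.ofFn g).length = n := List.length_ofFn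
      have hne : List.ofFn g ≠ [] := by
        intro h
        have := congrArg List.length h
        simp only [hlen, List.length_nil] at this
        omega
      have := key1 hM hs hC hG hinv (w := List.ofFn g) hne hY
      rwa [hlen] at this
  _ = ENNReal.ofReal (C ^ 3) * (μ (proj M n ⁻¹' S) * μ Y) := by
      have hsum : ∑ g ∈ (Set.toFinite S).toFinset, μ (cyl (List.ofFn g)) = μ (proj M n ⁻¹' S) := by
        rw [measure_preimage_proj]
        exact Finset.sum_congr rfl fun g _ => by rw [cyl_ofFn]
      rw [← hsum, Finset.sum_mul, Finset.mul_sum]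

lemma main_bound (hM : 2 ≤ M) (hs : 0 < s) (hC : 0 < C) (hG : IsGibbs A s C P μ)
    (hinv : MeasurePreserving (shift (M := M)) μ μ)
    {X Y : Set (ℕ → Fin M)} (hX : MeasurableSet X) (hY : MeasurableSet Y) :
    Filter.limsup (fun n : ℕ => μ (X ∩ shift^[n] ⁻¹' Y)) Filter.atTop ≤
      ENNReal.ofReal (C ^ 3) * (μ X * μ Y) := by
  refine ENNReal.le_of_forall_pos_le_add fun ε hε _ => ?_
  have hC3 : (0 : ℝ) < C ^ 3 + 1 := by positivity
  set ε' : ℝ := (ε : ℝ) / (C ^ 3 + 1) with hε'def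
  have hε' : 0 < ε' := div_pos (by exact_mod_cast hε) hC3
  have hdense : μ.MeasureDense (alg M) :=
    Measure.MeasureDense.of_generateFrom_isSetAlgebra_finite μ isSetAlgebra_alg generateFrom_alg
  obtain ⟨t, ⟨k, S, rfl⟩, -, hst⟩ := hdense.fin_meas_approx hX (measure_ne_top μ X) ε' hε'
  set T := proj M (k + 1) ⁻¹' S with hT
  have hμT : μ T ≤ μ X + ENNReal.ofReal ε' := by
    have hsub : T ⊆ X ∪ symmDiff X T := by
      intro y hy
      by_cases h : y ∈ X
      · exact Or.inl h
      · exact Or.inr (Set.mem_symmDiff.mpr (Or.inr ⟨hy, h⟩))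
    calc μ T ≤ μ (X ∪ symmDiff X T) := measure_mono hsub
    _ ≤ μ X + μ (symmDiff X T) := measure_union_le _ _
    _ ≤ μ X + ENNReal.ofReal ε' := add_le_add le_rfl hst.le
  have hfinal : ENNReal.ofReal (C ^ 3) * ENNReal.ofReal ε' + ENNReal.ofReal ε' = (ε : ENNReal) := by
    rw [← ENNReal.ofReal_mul (by positivity), ← ENNReal.ofReal_add (by positivity) hε'.le]
    rw [show C ^ 3 * ε' + ε' = (C ^ 3 + 1) * ε' by ring, hε'def,
      mul_div_cancel₀ _ (ne_of_gt hC3)]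
    exact ENNReal.ofReal_coe_nnreal
  have hev : ∀ᶠ n : ℕ in atTop, μ (X ∩ shift^[n] ⁻¹' Y) ≤
      ENNReal.ofReal (C ^ 3) * (μ X * μ Y) + (ε : ENNReal) := by
    refine Filter.eventually_atTop.mpr ⟨k + 1, fun n hn => ?_⟩
    have hTn : T = proj M n ⁻¹' ((fun g : Fin n → Fin M =>
        fun i : Fin (k + 1) => g (Fin.castLE hn i)) ⁻¹' S) := proj_comp hn S
    have hkey : μ (T ∩ shift^[n] ⁻¹' Y) ≤ ENNReal.ofReal (C ^ 3) * (μ T * μ Y) := by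
      rw [hTn]
      exact key2 hM hs hC hG hinv (by omega) _ hY
    have hsplit : X ∩ shift^[n] ⁻¹' Y ⊆ (T ∩ shift^[n] ⁻¹' Y) ∪ (X \ T) := by
      rintro y ⟨h1, h2⟩
      by_cases h3 : y ∈ T
      · exact Or.inl ⟨h3, h2⟩
      · exact Or.inr ⟨h1, h3⟩
    have hXT : μ (X \ T) ≤ ENNReal.ofReal ε' := by
      refine le_trans (measure_mono ?_) hst.le
      intro y hy
      exact Set.mem_symmDiff.mpr (Or.inl ⟨hy.1, hy.2⟩)
    calc μ (X ∩ shift^[n] ⁻¹' Y) ≤ μ ((T ∩ shift^[n] ⁻¹' Y) ∪ (X \ T)) := measure_mono hsplit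
    _ ≤ μ (T ∩ shift^[n] ⁻¹' Y) + μ (X \ T) := measure_union_le _ _
    _ ≤ ENNReal.ofReal (C ^ 3) * ((μ X + ENNReal.ofReal ε') * μ Y) + ENNReal.ofReal ε' := by
        exact add_le_add (hkey.trans (mul_le_mul' le_rfl (mul_le_mul' hμT le_rfl))) hXT
    _ = ENNReal.ofReal (C ^ 3) * (μ X * μ Y) +
          (ENNReal.ofReal (C ^ 3) * (ENNReal.ofReal ε' * μ Y) + ENNReal.ofReal ε') := by ring
    _ ≤ ENNReal.ofReal (C ^ 3) * (μ X * μ Y) +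
          (ENNReal.ofReal (C ^ 3) * (ENNReal.ofReal ε' * 1) + ENNReal.ofReal ε') := by
        gcongr
        exact prob_le_one
    _ = ENNReal.ofReal (C ^ 3) * (μ X * μ Y) + (ε : ENNReal) := by rw [mul_one, hfinal]
  exact limsup_le_of_le (by isBoundedDefault) hev

end main3
end S3

/-- the limsup inequality for Gibbs measures. -/
theorem stmt_3 {M d : ℕ} (hM : 2 ≤ M)
    (A : Fin M → Matrix (Fin d) (Fin d) ℝ) (s : ℝ) (hs : 0 < s)
    (μ : Measure (ℕ → Fin M)) [IsProbabilityMeasure μ]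
    (hinv : MeasurePreserving (shift (M := M)) μ μ)
    (C P : ℝ) (hC : 0 < C) (hG : IsGibbs A s C P μ) :
    ∀ X Y : Set (ℕ → Fin M), MeasurableSet X → MeasurableSet Y →
      Filter.limsup (fun n : ℕ => μ (X ∩ shift^[n] ⁻¹' Y)) Filter.atTop ≤
        ENNReal.ofReal (C ^ 4) * (μ X * μ Y) := by
  intro X Y hX hY
  refine le_trans (S3.main_bound hM hs hC hG hinv hX hY) ?_
  have hC1 : 1 ≤ C := S3.one_le_C hM hC hG
  have h34 : C ^ 3 ≤ C ^ 4 := pow_le_pow_right₀ (by linarith) (by norm_num)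
  exact mul_le_mul' (ENNReal.ofReal_le_ofReal h34) le_rfl
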